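/- Let n ∈ N, m ∈ Z, and c ∈ Z with gcd(c, n) = 1. If m ≡ 1 (mod p) for every prime p dividing n, and m ≡ 1 (mod 4) whenever 4 divides n, then the affine map f: Z/nZ → Z/nZ, y ↦ m·y + c, is a permutation consisting of a single cycle of length n. -/

import Mathlib

open Finset

/-- Per-prime-power divisibility of the geometric sum. -/
private lemma geom_prime_pow_dvd_iff (p : ℕ) (hp : p.Prime) (a : ℕ) (m : ℤ)
    (hd : (p : ℤ) ∣ m - 1) (h2 : p = 2 → 2 ≤ a → (4 : ℤ) ∣ m - 1) (k : ℕ) :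
    (p : ℤ) ^ a ∣ ∑ i ∈ range k, m ^ i ↔ (p : ℤ) ^ a ∣ (k : ℤ) := by
  have hpZ : Prime (p : ℤ) := Nat.prime_iff_prime_int.mp hp
  rcases Nat.eq_zero_or_pos a with rfl | ha
  · simp
  rcases Nat.eq_zero_or_pos k with rfl | hk
  · simp
  rcases eq_or_ne m 1 with rfl | hm1
  · simp
  -- the easy case `a = 1` (covers all primes)
  rcases eq_or_lt_of_le (show 1 ≤ a from ha) with ha1 | ha2
  · subst ha1
    have hSk : (p : ℤ) ∣ (∑ i ∈ range k, m ^ i) - (k : ℤ) := by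
      have h : (∑ i ∈ range k, m ^ i) - (k : ℤ) = ∑ i ∈ range k, (m ^ i - 1) := by
        rw [Finset.sum_sub_distrib]; simp
      rw [h]
      exact Finset.dvd_sum fun i _ =>
        hd.trans (by simpa using sub_dvd_pow_sub_pow m 1 i)
    simp only [pow_one]
    constructor
    · intro h
      have := dvd_sub h hSk
      simpa using this
    · intro h
      have := dvd_add hSk h
      simpa using this
  -- the main case `a ≥ 2`, via lifting the exponent
  have hm0 : m ≠ 0 := by
    rintro rfl
    exact hpZ.not_dvd_one (dvd_neg.mp (by simpa using hd))
  have hmm1 : m ≠ -1 := by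
    rintro rfl
    rcases eq_or_ne p 2 with rfl | hp2
    · have := h2 rfl ha2
      norm_num at this
    · have hdvd2 : (p : ℤ) ∣ 2 := dvd_neg.mp (by simpa using hd)
      have : p ∣ 2 := by exact_mod_cast hdvd2
      exact hp2 ((Nat.prime_dvd_prime_iff_eq hp Nat.prime_two).mp this)
  have hmabs : 1 < m.natAbs := by omega
  have hsub : m - 1 ≠ 0 := sub_ne_zero.mpr hm1
  have hx : ¬ (p : ℤ) ∣ m := by
    intro h
    exact hpZ.not_dvd_one (by simpa using dvd_sub h hd)
  have hfin : FiniteMultiplicity (p : ℤ) (m - 1) :=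
    Int.finiteMultiplicity_iff.mpr ⟨by simpa using hp.ne_one, hsub⟩
  -- lifting the exponent
  have hlte : emultiplicity (p : ℤ) (m ^ k - 1) =
      emultiplicity (p : ℤ) (m - 1) + emultiplicity (p : ℤ) (k : ℤ) := by
    rcases eq_or_ne p 2 with rfl | hp2
    · have h4 : (4 : ℤ) ∣ m - 1 := h2 rfl ha2
      have hx2 : ¬ (2 : ℤ) ∣ m := by exact_mod_cast hx
      have := Int.two_pow_sub_pow' k h4 hx2
      simpa using this
    · have hodd : Odd p := hp.odd_of_ne_two hp2
      have := Int.emultiplicity_pow_sub_pow hp hodd hd hx k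
      rw [← Int.natCast_emultiplicity] at this
      simpa using this
  have hES : emultiplicity (p : ℤ) (∑ i ∈ range k, m ^ i) =
      emultiplicity (p : ℤ) (k : ℤ) := by
    have h1 : emultiplicity (p : ℤ) (∑ i ∈ range k, m ^ i) +
        emultiplicity (p : ℤ) (m - 1) =
        emultiplicity (p : ℤ) (k : ℤ) + emultiplicity (p : ℤ) (m - 1) := by
      rw [← emultiplicity_mul hpZ, geom_sum_mul, hlte, add_comm]
    exact WithTop.add_right_cancel (finiteMultiplicity_iff_emultiplicity_ne_top.mp hfin) h1
  rw [pow_dvd_iff_le_emultiplicity, pow_dvd_iff_le_emultiplicity, hES]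

/-- The key divisibility lemma: `n ∣ 1 + m + ⋯ + m^(k-1)` iff `n ∣ k`. -/
private lemma geom_dvd_iff (n : ℕ) (m : ℤ)
    (hm : ∀ p : ℕ, p.Prime → p ∣ n → (p : ℤ) ∣ (m - 1))
    (hm4 : 4 ∣ n → (4 : ℤ) ∣ (m - 1)) (k : ℕ) :
    (n : ℤ) ∣ ∑ i ∈ range k, m ^ i ↔ n ∣ k := by
  set S : ℤ := ∑ i ∈ range k, m ^ i with hS
  have key : ∀ p a : ℕ, p.Prime → p ^ a ∣ n → ((p : ℤ) ^ a ∣ S ↔ (p : ℤ) ^ a ∣ (k : ℤ)) := by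
    intro p a hp hpa
    rcases Nat.eq_zero_or_pos a with rfl | ha
    · simp
    have hd : (p : ℤ) ∣ m - 1 :=
      hm p hp ((dvd_pow_self p ha.ne').trans hpa)
    have h2 : p = 2 → 2 ≤ a → (4 : ℤ) ∣ m - 1 := by
      rintro rfl h2a
      exact hm4 ((pow_dvd_pow 2 h2a).trans hpa)
    exact geom_prime_pow_dvd_iff p hp a m hd h2 k
  have castdvd : ∀ (p a : ℕ) (z : ℤ), ((p : ℤ) ^ a ∣ z ↔ p ^ a ∣ z.natAbs) := by
    intro p a z
    rw [show ((p : ℤ) ^ a) = ((p ^ a : ℕ) : ℤ) by push_cast; ring, Int.natCast_dvd]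
  have hl : (n : ℤ) ∣ S ↔ n ∣ S.natAbs := Int.natCast_dvd
  rw [hl, Nat.dvd_iff_prime_pow_dvd_dvd S.natAbs n, Nat.dvd_iff_prime_pow_dvd_dvd k n]
  constructor
  · intro h p a pp hpa
    have := (key p a pp hpa).mp ((castdvd p a S).mpr (h p a pp hpa))
    have := (castdvd p a (k : ℤ)).mp this
    simpa using this
  · intro h p a pp hpa
    have hk : (p : ℤ) ^ a ∣ (k : ℤ) := by
      have := h p a pp hpa
      rw [castdvd p a (k : ℤ)]
      simpa using this
    exact (castdvd p a S).mp ((key p a pp hpa).mpr hk)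

/-- Knuth's maximal-period theorem: if `gcd(c,n) = 1`, `m ≡ 1 (mod p)` for
every prime `p ∣ n`, and `m ≡ 1 (mod 4)` whenever `4 ∣ n`, then the affine map
`y ↦ m·y + c` on `ℤ/nℤ` is a permutation consisting of a single cycle of
length `n`. -/
theorem stmt19 (n : ℕ) (m c : ℤ) (hc : Int.gcd c n = 1)
    (hm : ∀ p : ℕ, p.Prime → p ∣ n → (p : ℤ) ∣ (m - 1))
    (hm4 : 4 ∣ n → (4 : ℤ) ∣ (m - 1)) :
    ∀ y : ZMod n,
      Function.minimalPeriod (fun y : ZMod n => (m : ZMod n) * y + (c : ZMod n)) y = n := by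
  set f : ZMod n → ZMod n := fun y => (m : ZMod n) * y + (c : ZMod n) with hf
  -- iterate formula
  have hiter : ∀ (k : ℕ) (y : ZMod n),
      f^[k] y = (m : ZMod n) ^ k * y + (∑ i ∈ range k, (m : ZMod n) ^ i) * c := by
    intro k y
    induction k with
    | zero => simp
    | succ k ih =>
      rw [Function.iterate_succ_apply', ih, geom_sum_succ]
      show (m : ZMod n) * _ + _ = _
      ring
  -- `(m : ZMod n) - 1` is nilpotent
  have hnil : IsNilpotent ((m : ZMod n) - 1) := by
    rcases eq_or_ne n 0 with rfl | hn
    · have hm1 : m - 1 = 0 := by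
        by_contra h
        obtain ⟨p, hple, hp⟩ := Nat.exists_infinite_primes ((m - 1).natAbs + 1)
        have h1 : (p : ℤ) ∣ m - 1 := hm p hp (dvd_zero p)
        have h2 : p ∣ (m - 1).natAbs := Int.natCast_dvd.mp h1
        have h3 : p ≤ (m - 1).natAbs := Nat.le_of_dvd (by omega) h2
        omega
      refine ⟨1, ?_⟩
      have : m = 1 := by omega
      simp [this]
    · refine ⟨n, ?_⟩
      have h1 : ((m : ZMod n) - 1) = ((m - 1 : ℤ) : ZMod n) := by push_cast; ring
      rw [h1, ← Int.cast_pow, ZMod.intCast_zmod_eq_zero_iff_dvd]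
      rw [Int.natCast_dvd, Int.natAbs_pow]
      rw [Nat.dvd_iff_prime_pow_dvd_dvd ((m - 1).natAbs ^ n) n]
      intro p a pp hpa
      rcases Nat.eq_zero_or_pos a with rfl | ha
      · simp
      have hpd : p ∣ (m - 1).natAbs :=
        Int.natCast_dvd.mp (hm p pp ((dvd_pow_self p ha.ne').trans hpa))
      have han : a ≤ n := by
        have h1 : p ^ a ≤ n := Nat.le_of_dvd (Nat.pos_of_ne_zero hn) hpa
        have h2 : a < p ^ a := Nat.lt_pow_self pp.one_lt
        omega
      exact (pow_dvd_pow_of_dvd hpd a).trans (pow_dvd_pow _ han)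
  -- `c` is a unit
  have hcu : IsUnit (c : ZMod n) := by
    have h1 : IsCoprime c (n : ℤ) := Int.isCoprime_iff_gcd_eq_one.mpr hc
    have h2 := h1.map (Int.castRingHom (ZMod n))
    simp only [map_intCast, map_natCast, Int.cast_natCast, ZMod.natCast_self] at h2
    exact isCoprime_zero_right.mp h2
  intro y
  -- the relevant unit
  have hu : IsUnit (((m : ZMod n) - 1) * y + (c : ZMod n)) := by
    have hnily : IsNilpotent (((m : ZMod n) - 1) * y) :=
      (Commute.all _ y).isNilpotent_mul_right hnil
    have := hnily.isUnit_add_left_of_commute hcu (Commute.all _ _)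
    rwa [add_comm] at this
  -- periodicity criterion
  have hkey : ∀ k : ℕ, Function.IsPeriodicPt f k y ↔ n ∣ k := by
    intro k
    rw [Function.IsPeriodicPt, Function.IsFixedPt, hiter k y]
    rw [← sub_eq_zero]
    have hfact : (m : ZMod n) ^ k * y + (∑ i ∈ range k, (m : ZMod n) ^ i) * c - y =
        (∑ i ∈ range k, (m : ZMod n) ^ i) * (((m : ZMod n) - 1) * y + (c : ZMod n)) := by
      rw [mul_add, ← mul_assoc, geom_sum_mul]
      ring
    rw [hfact, hu.mul_left_eq_zero]
    have hcast : (∑ i ∈ range k, (m : ZMod n) ^ i) =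
        (((∑ i ∈ range k, m ^ i : ℤ)) : ZMod n) := by push_cast; ring
    rw [hcast, ZMod.intCast_zmod_eq_zero_iff_dvd]
    exact geom_dvd_iff n m hm hm4 k
  exact Nat.dvd_antisymm ((hkey n).mpr dvd_rfl).minimalPeriod_dvd
    ((hkey _).mp (Function.isPeriodicPt_minimalPeriod f y))
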